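/- Let F, G be complex matrices with m×n and p×n shapes respectively, ν_f, ν_g > 0. The maximum over unit-trace Hermitian positive semidefinite Q of the generalized Rayleigh quotient (tr(F Q F*) + ν_f)/(tr(G Q G*) + ν_g) is attained at a rank-one Q, i.e., there exists a unit vector v ∈ ℂ^n such that Q* = v v* achieves the maximum. -/

import Mathlib

open Matrix
open scoped ComplexOrder

noncomputable def outerM {n : ℕ} (v : Fin n → ℂ) : Matrix (Fin n) (Fin n) ℂ :=
  Matrix.of fun i j => v i * star (v j)

lemma outerM_posSemidef {n : ℕ} (v : Fin n → ℂ) : (outerM v).PosSemidef := by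
  refine Matrix.PosSemidef.of_dotProduct_mulVec_nonneg ?_ ?_
  · ext i j
    simp [outerM, Matrix.conjTranspose_apply, mul_comm]
  · intro x
    have h : star x ⬝ᵥ (outerM v *ᵥ x) =
        star (∑ j, star (v j) * x j) * (∑ j, star (v j) * x j) := by
      simp only [dotProduct, mulVec, outerM, Matrix.of_apply, dotProduct,
        Finset.mul_sum, Finset.sum_mul, star_sum, StarMul.star_mul, star_star, Pi.star_apply]
      rw [Finset.sum_comm]
      congr 1; ext i; congr 1; ext j
      simp [StarMul.star_mul]; ring
    rw [h]
    exact star_mul_self_nonneg _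

lemma outerM_trace {n : ℕ} (v : Fin n → ℂ) :
    (outerM v).trace = ((∑ i, ‖v i‖ ^ 2 : ℝ) : ℂ) := by
  simp only [Matrix.trace, Matrix.diag, outerM, Matrix.of_apply]
  push_cast
  congr 1; ext i
  rw [show star (v i) = (starRingEnd ℂ) (v i) from rfl, Complex.mul_conj]
  simp [Complex.normSq_eq_norm_sq]

lemma psd_trace_re_nonneg {n : ℕ} {M : Matrix (Fin n) (Fin n) ℂ}
    (hM : M.PosSemidef) : 0 ≤ M.trace.re := by
  have h : ∀ i, 0 ≤ (M i i).re := by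
    intro i
    have := hM.dotProduct_mulVec_nonneg (Pi.single i 1)
    rw [Complex.le_def] at this
    have he : (star (Pi.single i 1) ⬝ᵥ M *ᵥ Pi.single i (1:ℂ)) = M i i := by
      simp [dotProduct, mulVec, Pi.single_apply, Finset.sum_ite_eq]
    rw [he] at this
    exact this.1
  rw [Matrix.trace, Complex.re_sum]
  exact Finset.sum_nonneg fun i _ => h i

lemma spectral_decomp {n : ℕ} {Q : Matrix (Fin n) (Fin n) ℂ}
    (hQ : Q.PosSemidef) :
    ∃ (lam : Fin n → ℝ) (u : Fin n → Fin n → ℂ),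
      (∀ i, 0 ≤ lam i) ∧ (∀ i, ∑ a, ‖u i a‖ ^ 2 = 1) ∧
      Q = ∑ i, ((lam i : ℂ) • outerM (u i)) := by
  have hH := hQ.1
  set U : Matrix (Fin n) (Fin n) ℂ := (hH.eigenvectorUnitary : Matrix (Fin n) (Fin n) ℂ) with hUdef
  refine ⟨hH.eigenvalues, fun i a => U a i, fun i => hQ.eigenvalues_nonneg i, ?_, ?_⟩
  · intro i
    have hU : star U * U = 1 := (Matrix.mem_unitaryGroup_iff').mp hH.eigenvectorUnitary.2
    have h1 : (star U * U) i i = 1 := by rw [hU]; simp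
    rw [Matrix.mul_apply] at h1
    have h2 : (((∑ a, ‖U a i‖ ^ 2 : ℝ)) : ℂ) = 1 := by
      rw [← h1]
      push_cast
      congr 1; ext a
      simp only [Matrix.star_apply]
      rw [show star (U a i) = (starRingEnd ℂ) (U a i) from rfl, mul_comm, Complex.mul_conj]
      simp [Complex.normSq_eq_norm_sq]
    exact_mod_cast h2
  · conv_lhs => rw [hH.spectral_theorem]
    ext a b
    simp only [Unitary.conjStarAlgAut_apply, Matrix.mul_apply, Matrix.diagonal_apply, Function.comp_apply,
      Matrix.sum_apply, Matrix.smul_apply, outerM, Matrix.of_apply,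
      Matrix.star_apply, smul_eq_mul, Complex.real_smul, mul_ite, mul_zero,
      ite_mul, zero_mul, Finset.sum_ite_eq, Finset.sum_ite_eq', Finset.mem_univ, if_true]
    congr 1; funext j
    rw [mul_right_comm]
    exact mul_comm _ _

section aux
variable {n : ℕ}

lemma trace_decomp {m' : ℕ} (F : Matrix (Fin m') (Fin n) ℂ)
    (lam : Fin n → ℝ) (u : Fin n → Fin n → ℂ) :
    (F * (∑ i, ((lam i : ℂ) • outerM (u i))) * Fᴴ).trace.re =
      ∑ i, lam i * (F * outerM (u i) * Fᴴ).trace.re := by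
  rw [Matrix.mul_sum, Matrix.sum_mul, Matrix.trace_sum, Complex.re_sum]
  congr 1; funext i
  rw [Matrix.mul_smul, Matrix.smul_mul, Matrix.trace_smul, smul_eq_mul]
  simp [Complex.mul_re]

lemma cont_tr {m' : ℕ} (F : Matrix (Fin m') (Fin n) ℂ) :
    Continuous fun v : Fin n → ℂ => (F * outerM v * Fᴴ).trace.re := by
  apply Complex.continuous_re.comp
  simp only [Matrix.trace, Matrix.diag, Matrix.mul_apply, outerM, Matrix.of_apply]
  fun_prop

end aux

lemma tr_nonneg {n m' : ℕ} (F : Matrix (Fin m') (Fin n) ℂ)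
    {Q : Matrix (Fin n) (Fin n) ℂ} (hQ : Q.PosSemidef) :
    0 ≤ (F * Q * Fᴴ).trace.re :=
  psd_trace_re_nonneg (hQ.mul_mul_conjTranspose_same F)

/-- The maximum of the generalized Rayleigh quotient
`Q ↦ (tr(F Q Fᴴ) + ν_f)/(tr(G Q Gᴴ) + ν_g)` over unit-trace Hermitian positive
semidefinite `Q` is attained at a rank-one matrix `Q* = v vᴴ` for some unit
vector `v`. -/
theorem stmt17 (m p n : ℕ) (hn : 0 < n)
    (F : Matrix (Fin m) (Fin n) ℂ) (G : Matrix (Fin p) (Fin n) ℂ)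
    (νf νg : ℝ) (hνf : 0 < νf) (hνg : 0 < νg) :
    ∃ v : Fin n → ℂ, (∑ i, ‖v i‖ ^ 2 = 1) ∧
      (Matrix.of fun i j => v i * star (v j)).PosSemidef ∧
      (Matrix.of fun i j => v i * star (v j)).trace = 1 ∧
      ∀ Q : Matrix (Fin n) (Fin n) ℂ, Q.PosSemidef → Q.trace = 1 →
        ((F * Q * Fᴴ).trace.re + νf) / ((G * Q * Gᴴ).trace.re + νg) ≤
          ((F * (Matrix.of fun i j => v i * star (v j)) * Fᴴ).trace.re + νf) /
            ((G * (Matrix.of fun i j => v i * star (v j)) * Gᴴ).trace.re + νg) := by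
  -- the objective restricted to rank-one matrices
  set φ : (Fin n → ℂ) → ℝ := fun v =>
    ((F * outerM v * Fᴴ).trace.re + νf) / ((G * outerM v * Gᴴ).trace.re + νg) with hφ
  have hφcont : Continuous φ := by
    apply Continuous.div ((cont_tr F).add continuous_const) ((cont_tr G).add continuous_const)
    intro v
    have := tr_nonneg G (outerM_posSemidef v)
    exact ne_of_gt (by simp only [Pi.add_apply]; linarith)
  -- the unit sphere
  set S : Set (Fin n → ℂ) := {v | ∑ i, ‖v i‖ ^ 2 = 1} with hS
  have hSne : S.Nonempty := by
    refine ⟨Pi.single ⟨0, hn⟩ 1, ?_⟩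
    simp [hS, Pi.single_apply, apply_ite (‖·‖), Finset.sum_ite_eq]
  have hScl : IsClosed S := by
    have : Continuous fun v : Fin n → ℂ => ∑ i, ‖v i‖ ^ 2 := by fun_prop
    exact isClosed_eq this continuous_const
  have hScomp : IsCompact S := by
    apply IsCompact.of_isClosed_subset (isCompact_closedBall (0 : Fin n → ℂ) 1) hScl
    intro v hv
    simp only [Metric.mem_closedBall, dist_zero_right]
    rw [pi_norm_le_iff_of_nonneg zero_le_one]
    intro i
    have h1 : ‖v i‖ ^ 2 ≤ 1 := by
      rw [← hv]
      exact Finset.single_le_sum (f := fun j => ‖v j‖ ^ 2) (fun j _ => by positivity) (Finset.mem_univ i)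
    nlinarith [norm_nonneg (v i)]
  obtain ⟨v, hvS, hvmax⟩ := hScomp.exists_isMaxOn hSne hφcont.continuousOn
  have hvS' : ∑ i, ‖v i‖ ^ 2 = 1 := hvS
  refine ⟨v, hvS', outerM_posSemidef v, by rw [show (Matrix.of fun i j => v i * star (v j)) = outerM v from rfl, outerM_trace, hvS']; norm_num, ?_⟩
  intro Q hQ hQtr
  obtain ⟨lam, u, hlam, hu, hdecomp⟩ := spectral_decomp hQ
  -- sum of eigenvalues is 1
  have hsum : ∑ i, lam i = 1 := by
    have h1 : Q.trace = ∑ i, ((lam i : ℂ)) := by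
      rw [hdecomp, Matrix.trace_sum]
      congr 1; funext i
      rw [Matrix.trace_smul, outerM_trace (u i), hu i, smul_eq_mul]
      norm_num
    rw [hQtr] at h1
    have := congrArg Complex.re h1.symm
    rw [Complex.re_sum] at this
    simpa using this
  -- numerator and denominator decompositions
  have hF : (F * Q * Fᴴ).trace.re = ∑ i, lam i * (F * outerM (u i) * Fᴴ).trace.re := by
    rw [hdecomp]; exact trace_decomp F lam u
  have hG : (G * Q * Gᴴ).trace.re = ∑ i, lam i * (G * outerM (u i) * Gᴴ).trace.re := by
    rw [hdecomp]; exact trace_decomp G lam u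
  -- abbreviations
  set c : ℝ := φ v with hc
  have hdenv : 0 < (G * outerM v * Gᴴ).trace.re + νg := by
    have := tr_nonneg G (outerM_posSemidef v); linarith
  -- each rank-one value is at most c
  have hbound : ∀ i, (F * outerM (u i) * Fᴴ).trace.re + νf ≤
      c * ((G * outerM (u i) * Gᴴ).trace.re + νg) := by
    intro i
    have hui : u i ∈ S := hu i
    have hle : φ (u i) ≤ c := hvmax hui
    have hd : 0 < (G * outerM (u i) * Gᴴ).trace.re + νg := by
      have := tr_nonneg G (outerM_posSemidef (u i)); linarith
    rw [hφ] at hle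
    exact (div_le_iff₀ hd).mp hle
  -- denominator of Q is positive
  have hdQ : 0 < (G * Q * Gᴴ).trace.re + νg := by
    have h0 : 0 ≤ (G * Q * Gᴴ).trace.re := tr_nonneg G hQ
    linarith
  show _ ≤ c
  rw [div_le_iff₀ hdQ, hF, hG]
  have key : ∑ i, lam i * (F * outerM (u i) * Fᴴ).trace.re + νf =
      ∑ i, lam i * ((F * outerM (u i) * Fᴴ).trace.re + νf) := by
    rw [Finset.sum_congr rfl fun i _ => mul_add (lam i) _ νf, Finset.sum_add_distrib,
      ← Finset.sum_mul, hsum, one_mul]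
  have key2 : ∑ i, lam i * (G * outerM (u i) * Gᴴ).trace.re + νg =
      ∑ i, lam i * ((G * outerM (u i) * Gᴴ).trace.re + νg) := by
    rw [Finset.sum_congr rfl fun i _ => mul_add (lam i) _ νg, Finset.sum_add_distrib,
      ← Finset.sum_mul, hsum, one_mul]
  rw [key, key2, Finset.mul_sum]
  apply Finset.sum_le_sum
  intro i _
  calc lam i * ((F * outerM (u i) * Fᴴ).trace.re + νf)
      ≤ lam i * (c * ((G * outerM (u i) * Gᴴ).trace.re + νg)) :=
        mul_le_mul_of_nonneg_left (hbound i) (hlam i)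
    _ = c * (lam i * ((G * outerM (u i) * Gᴴ).trace.re + νg)) := by ring
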